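/- arXiv:2101.05142 — 6 statements merged into one kernel-verified Lean document; each statement's English description precedes it below -/
import Mathlib

section
/- Let a, d ∈ F_p^n and c ∈ F_p. The renaming Δ_d, which maps the literal ξ_{i,k} to ξ_{i,k+d_i} (and negated literals correspondingly), maps the clause set F(a,c) onto itself if and only if a·d = 0, provided a ≠ 0; more precisely: if a·d = 0 then Δ_d(F(a,c)) = F(a,c), and if a·d ≠ 0 then there is a clause C ∈ F(a,c) with Δ_d(C) ∉ F(a,c). -/
/-! Encoding of linear equations over `F_p` as CNF formulas, with variables
`ξ_{i,k}` for `i : Fin n`, `k : ZMod p`. -/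

/-- `supp` of a vector: the set of indices with nonzero entry. -/
def suppV {n : ℕ} {K : Type*} [Zero K] [DecidableEq K] (a : Fin n → K) : Finset (Fin n) :=
  Finset.univ.filter (fun i => a i ≠ 0)

/-- `P(a,c)` : assignments violating the equation `a·x = c`, supported on `supp(a)`. -/
def PViol {n p : ℕ} (a : Fin n → ZMod p) (c : ZMod p) : Set (Fin n → ZMod p) :=
  {x | dotProduct a x ≠ c ∧ suppV x ⊆ suppV a}

/-- The clause `C_a(x) = ⋁_{i ∈ supp(a)} ¬ξ_{i,x_i}`. -/
def CCl {n p : ℕ} (a x : Fin n → ZMod p) : Finset ((Fin n × ZMod p) × Bool) :=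
  (suppV a).image (fun i => ((i, x i), false))

/-- The CNF formula `F(a,c)` for a single equation `a·x = c`. -/
def FEq {n p : ℕ} (a : Fin n → ZMod p) (c : ZMod p) :
    Set (Finset ((Fin n × ZMod p) × Bool)) :=
  (fun x => CCl a x) '' (PViol a c)

/-- The CNF formula `F(A,b)` for a system of equations. -/
def FSys {m n p : ℕ} (A : Matrix (Fin m) (Fin n) (ZMod p)) (b : Fin m → ZMod p) :
    Set (Finset ((Fin n × ZMod p) × Bool)) :=
  ⋃ i, FEq (A i) (b i)

/-- The clauses `V = ⋀_i ⋁_k ξ_{i,k}`. -/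
def VCl (n p : ℕ) [NeZero p] : Set (Finset ((Fin n × ZMod p) × Bool)) :=
  {C | ∃ i : Fin n, C = Finset.univ.image (fun k : ZMod p => ((i, k), true))}

/-- The renaming `Δ_d` on literals: `ξ_{i,k} ↦ ξ_{i,k+d_i}` (preserving polarity). -/
def DeltaLit {n p : ℕ} (d : Fin n → ZMod p) (l : (Fin n × ZMod p) × Bool) :
    (Fin n × ZMod p) × Bool :=
  ((l.1.1, l.1.2 + d l.1.1), l.2)

/-- `Δ_d` applied to a clause, literal by literal. -/
def DeltaCl {n p : ℕ} (d : Fin n → ZMod p) (C : Finset ((Fin n × ZMod p) × Bool)) :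
    Finset ((Fin n × ZMod p) × Bool) :=
  C.image (DeltaLit d)

lemma ccl_agree {n p : ℕ} (a y z : Fin n → ZMod p) (h : CCl a y = CCl a z) :
    ∀ i ∈ suppV a, y i = z i := by
  intro i hi
  have hm : ((i, y i), false) ∈ CCl a z := by
    rw [← h]; exact Finset.mem_image_of_mem _ hi
  simp only [CCl, Finset.mem_image] at hm
  obtain ⟨j, _, hj⟩ := hm
  have h1 : j = i := congrArg (fun q => q.1.1) hj
  subst h1
  exact (congrArg (fun q => q.1.2) hj).symm

lemma dot_agree {n p : ℕ} (a y z : Fin n → ZMod p)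
    (h : ∀ i ∈ suppV a, y i = z i) :
    dotProduct a y = dotProduct a z := by
  unfold dotProduct
  apply Finset.sum_congr rfl
  intro i _
  by_cases hi : a i = 0
  · simp [hi]
  · rw [h i (by simp [suppV, hi])]

/-- `Δ_d` maps `F(a,c)` onto itself iff `a·d = 0` (for `a ≠ 0`): if `a·d = 0`
then `Δ_d(F(a,c)) = F(a,c)`, and if `a·d ≠ 0` then some clause of `F(a,c)` is
mapped outside `F(a,c)`. -/
theorem stmt4 {p n : ℕ} [Fact (Nat.Prime p)]
    (a d : Fin n → ZMod p) (c : ZMod p) (ha : a ≠ 0) :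
    (dotProduct a d = 0 → DeltaCl d '' FEq a c = FEq a c) ∧
    (dotProduct a d ≠ 0 → ∃ C ∈ FEq a c, DeltaCl d C ∉ FEq a c) := by
  classical
  set dt : Fin n → ZMod p := fun i => if a i ≠ 0 then d i else 0 with hdt
  have hdot : dotProduct a dt = dotProduct a d := by
    unfold dotProduct
    apply Finset.sum_congr rfl
    intro i _
    by_cases h : a i = 0 <;> simp [dt, h]
  have hkey : ∀ x : Fin n → ZMod p, DeltaCl d (CCl a x) = CCl a (x + dt) := by
    intro x
    unfold DeltaCl CCl
    rw [Finset.image_image]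
    apply Finset.image_congr
    intro i hi
    simp only [suppV, Finset.mem_coe, Finset.mem_filter, Finset.mem_univ, true_and] at hi
    simp [DeltaLit, dt, hi]
  have hsupp : ∀ x : Fin n → ZMod p, suppV x ⊆ suppV a → suppV (x + dt) ⊆ suppV a := by
    intro x hx i hi
    simp only [suppV, Finset.mem_filter, Finset.mem_univ, true_and] at hi ⊢
    intro hai
    apply hi
    have hx0 : x i = 0 := by
      by_contra hxi
      exact (Finset.mem_filter.1 (hx (by simp [suppV, hxi]))).2 hai
    simp [hx0, dt, hai]
  have hdsum : ∀ x : Fin n → ZMod p,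
      dotProduct a (x + dt) = dotProduct a x + dotProduct a d := by
    intro x
    rw [dotProduct_add, hdot]
  have hmem : ∀ y : Fin n → ZMod p, suppV y ⊆ suppV a →
      (CCl a y ∈ FEq a c ↔ dotProduct a y ≠ c) := by
    intro y hy
    constructor
    · rintro ⟨z, ⟨hz1, hz2⟩, hzeq⟩
      have : dotProduct a z = dotProduct a y :=
        dot_agree a z y (ccl_agree a z y hzeq)
      rwa [this] at hz1
    · intro h
      exact ⟨y, ⟨h, hy⟩, rfl⟩
  constructor
  · intro h0
    ext C
    constructor
    · rintro ⟨C', ⟨x, ⟨hx1, hx2⟩, rfl⟩, rfl⟩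
      rw [hkey]
      refine ⟨x + dt, ⟨?_, hsupp x hx2⟩, rfl⟩
      rw [hdsum, h0, add_zero]; exact hx1
    · rintro ⟨y, ⟨hy1, hy2⟩, rfl⟩
      refine ⟨CCl a (y - dt), ⟨y - dt, ⟨?_, ?_⟩, rfl⟩, ?_⟩
      · rw [show y - dt = y + (-dt) by ring, dotProduct_add,
          dotProduct_neg, hdot, h0, neg_zero, add_zero]
        exact hy1
      · intro i hi
        simp only [suppV, Finset.mem_filter, Finset.mem_univ, true_and] at hi ⊢
        intro hai
        apply hi
        have hy0 : y i = 0 := by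
          by_contra hyi
          exact (Finset.mem_filter.1 (hy2 (by simp [suppV, hyi]))).2 hai
        simp [Pi.sub_apply, hy0, dt, hai]
      · rw [hkey, sub_add_cancel]
  · intro hne
    obtain ⟨i0, hi0⟩ : ∃ i, a i ≠ 0 := Function.ne_iff.1 ha
    set x : Fin n → ZMod p :=
      fun i => if i = i0 then (c - dotProduct a d) * (a i0)⁻¹ else 0 with hx
    have hxsupp : suppV x ⊆ suppV a := by
      intro i hi
      simp only [suppV, Finset.mem_filter, Finset.mem_univ, true_and] at hi ⊢
      by_cases h : i = i0
      · subst h; exact hi0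
      · simp [x, h] at hi
    have hax : dotProduct a x = c - dotProduct a d := by
      unfold dotProduct
      rw [Finset.sum_eq_single i0]
      · simp only [x, if_pos rfl]
        rw [mul_comm, mul_assoc, inv_mul_cancel₀ hi0, mul_one]
        rfl
      · intro b _ hb
        simp [x, hb]
      · intro h
        exact absurd (Finset.mem_univ i0) h
    have hxviol : dotProduct a x ≠ c := by
      rw [hax]
      intro h
      apply hne
      exact sub_eq_self.mp h
    refine ⟨CCl a x, ⟨x, ⟨hxviol, hxsupp⟩, rfl⟩, ?_⟩
    rw [hkey]
    rw [hmem _ (hsupp x hxsupp)]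
    push_neg
    rw [hdsum, hax]
    ring
end

section
/- Let A ∈ F_p^{m×n}, b ∈ F_p^m, and d ∈ F_p^n. If A·d = 0 then the renaming Δ_d maps the clause set F(A,b) into itself, i.e., Δ_d(F(A,b)) ⊆ F(A,b). -/
/-- If `A·d = 0` then the renaming `Δ_d` maps `F(A,b)` into itself. -/
theorem stmt5 {p m n : ℕ} [Fact (Nat.Prime p)]
    (A : Matrix (Fin m) (Fin n) (ZMod p)) (b : Fin m → ZMod p)
    (d : Fin n → ZMod p) (h : A.mulVec d = 0) :
    DeltaCl d '' FSys A b ⊆ FSys A b := by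
  rintro _ ⟨C, hC, rfl⟩
  simp only [FSys, Set.mem_iUnion] at hC ⊢
  obtain ⟨i, x, ⟨hx, hsupp⟩, rfl⟩ := hC
  refine ⟨i, fun j => if A i j ≠ 0 then x j + d j else 0, ⟨?_, ?_⟩, ?_⟩
  · have hd : dotProduct (A i) d = 0 := congrFun h i
    have : dotProduct (A i) (fun j => if A i j ≠ 0 then x j + d j else 0)
        = dotProduct (A i) x + dotProduct (A i) d := by
      simp only [dotProduct, ← Finset.sum_add_distrib]
      refine Finset.sum_congr rfl fun j _ => ?_
      by_cases hj : A i j = 0 <;> simp [hj, mul_add]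
    rw [this, hd, add_zero]; exact hx
  · intro j hj
    simp only [suppV, Finset.mem_filter, Finset.mem_univ, true_and] at hj ⊢
    by_contra hz
    simp [hz] at hj
  · simp only [DeltaCl, CCl, Finset.image_image]
    refine Finset.image_congr fun j hj => ?_
    simp only [suppV, Finset.coe_filter, Finset.mem_univ, true_and, Set.mem_setOf_eq] at hj
    simp [DeltaLit, hj]
end

section
/- For any θ ⊆ [1,n], the set of clauses Ω(θ) := { ⋁_{i∈θ} ¬ξ_{i,x_i} | x ∈ F_p^n, supp(x) ⊆ θ } together with V := ⋀_{i=1}^n ⋁_{k∈F_p} ξ_{i,k} admits a resolution refutation (derivation of the empty clause) of length at most (p^{|θ|+1} − p)/(p − 1). -/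
/-! Resolution proof system: clauses are finite sets of literals, a literal is
a pair (variable, polarity). -/

variable {V : Type} [DecidableEq V]

/-- `C` is a resolvent of `C₁` and `C₂` (on some variable `x`). -/
def Resolvent (C₁ C₂ C : Finset (V × Bool)) : Prop :=
  ∃ x : V, (x, true) ∈ C₁ ∧ (x, false) ∈ C₂ ∧
    C = C₁.erase (x, true) ∪ C₂.erase (x, false)

/-- A resolution derivation from the clause set `A`, newest clause first:
each listed clause is a resolvent of two clauses that are in `A` or occur later
in the list. -/
def IsDerivation (A : Set (Finset (V × Bool))) : List (Finset (V × Bool)) → Prop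
  | [] => True
  | c :: rest => IsDerivation A rest ∧
      ∃ c₁ c₂, (c₁ ∈ A ∨ c₁ ∈ rest) ∧ (c₂ ∈ A ∨ c₂ ∈ rest) ∧ Resolvent c₁ c₂ c

/-- `Derives A n B` : every clause of `B` can be obtained from `A` by a single
resolution derivation adding at most `n` resolvents. -/
def Derives (A : Set (Finset (V × Bool))) (n : ℕ) (B : Set (Finset (V × Bool))) : Prop :=
  ∃ L : List (Finset (V × Bool)), IsDerivation A L ∧ L.length ≤ n ∧
    B ⊆ A ∪ {c | c ∈ L}

lemma isDerivation_mono {A A' : Set (Finset (V × Bool))} (h : A ⊆ A') :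
    ∀ L, IsDerivation A L → IsDerivation A' L := by
  intro L
  induction L with
  | nil => intro; trivial
  | cons c rest ih =>
    rintro ⟨hd, c₁, c₂, h₁, h₂, hr⟩
    exact ⟨ih hd, c₁, c₂, h₁.imp (fun t => h t) id, h₂.imp (fun t => h t) id, hr⟩

lemma isDerivation_append {A : Set (Finset (V × Bool))} {L₁ L₂ : List (Finset (V × Bool))}
    (h₁ : IsDerivation A L₁) (h₂ : IsDerivation (A ∪ {c | c ∈ L₁}) L₂) :
    IsDerivation A (L₂ ++ L₁) := by
  induction L₂ with
  | nil => exact h₁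
  | cons c rest ih =>
    obtain ⟨hd, c₁, c₂, hm₁, hm₂, hr⟩ := h₂
    refine ⟨ih hd, c₁, c₂, ?_, ?_, hr⟩
    · rcases hm₁ with (h | h) | h
      · exact Or.inl h
      · exact Or.inr (List.mem_append.2 (Or.inr h))
      · exact Or.inr (List.mem_append.2 (Or.inl h))
    · rcases hm₂ with (h | h) | h
      · exact Or.inl h
      · exact Or.inr (List.mem_append.2 (Or.inr h))
      · exact Or.inr (List.mem_append.2 (Or.inl h))

lemma derives_of_subset {A B : Set (Finset (V × Bool))} {m : ℕ} (h : B ⊆ A) :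
    Derives A m B :=
  ⟨[], trivial, Nat.zero_le _, fun c hc => Or.inl (h hc)⟩

lemma Derives.mono_set {A A' B : Set (Finset (V × Bool))} {m : ℕ} (h : A ⊆ A')
    (hd : Derives A m B) : Derives A' m B := by
  obtain ⟨L, hL, hlen, hB⟩ := hd
  exact ⟨L, isDerivation_mono h L hL, hlen, fun c hc => (hB hc).imp (fun t => h t) id⟩

lemma Derives.mono_n {A B : Set (Finset (V × Bool))} {m m' : ℕ} (h : m ≤ m')
    (hd : Derives A m B) : Derives A m' B := by
  obtain ⟨L, hL, hlen, hB⟩ := hd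
  exact ⟨L, hL, hlen.trans h, hB⟩

lemma Derives.subset_right {A B B' : Set (Finset (V × Bool))} {m : ℕ} (h : B' ⊆ B)
    (hd : Derives A m B) : Derives A m B' := by
  obtain ⟨L, hL, hlen, hB⟩ := hd
  exact ⟨L, hL, hlen, fun c hc => hB (h hc)⟩

lemma Derives.trans {A B C : Set (Finset (V × Bool))} {m k : ℕ}
    (h1 : Derives A m B) (h2 : Derives (A ∪ B) k C) : Derives A (m + k) C := by
  obtain ⟨L₁, hL₁, hlen₁, hB⟩ := h1
  obtain ⟨L₂, hL₂, hlen₂, hC⟩ := h2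
  have hsub : A ∪ B ⊆ A ∪ {c | c ∈ L₁} := by
    rintro c (hc | hc)
    · exact Or.inl hc
    · exact hB hc
  refine ⟨L₂ ++ L₁, isDerivation_append hL₁ (isDerivation_mono hsub L₂ hL₂), ?_, ?_⟩
  · simpa [List.length_append] using by omega
  · intro c hc
    rcases hC hc with hc' | hc'
    · rcases hsub hc' with h | h
      · exact Or.inl h
      · exact Or.inr (List.mem_append.2 (Or.inr h))
    · exact Or.inr (List.mem_append.2 (Or.inl hc'))

lemma Derives.union {A B B' : Set (Finset (V × Bool))} {m m' : ℕ}
    (h1 : Derives A m B) (h2 : Derives A m' B') : Derives A (m + m') (B ∪ B') := by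
  obtain ⟨L₁, hL₁, hlen₁, hB⟩ := h1
  obtain ⟨L₂, hL₂, hlen₂, hB'⟩ := h2
  refine ⟨L₂ ++ L₁, isDerivation_append hL₁
    (isDerivation_mono (Set.subset_union_left) L₂ hL₂), ?_, ?_⟩
  · simpa [List.length_append] using by omega
  · rintro c (hc | hc)
    · exact (hB hc).imp id (fun h => List.mem_append.2 (Or.inr h))
    · exact (hB' hc).imp id (fun h => List.mem_append.2 (Or.inl h))

lemma derives_biUnion {ι : Type*} [DecidableEq ι] {A : Set (Finset (V × Bool))} {m : ℕ}
    (S : Finset ι) (f : ι → Set (Finset (V × Bool)))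
    (h : ∀ a ∈ S, Derives A m (f a)) :
    Derives A (S.card * m) (⋃ a ∈ S, f a) := by
  induction S using Finset.induction with
  | empty => exact ⟨[], trivial, by simp, by simp⟩
  | @insert a S ha ih =>
    rw [Finset.card_insert_of_notMem ha]
    have := (h a (Finset.mem_insert_self a S)).union
      (ih (fun b hb => h b (Finset.mem_insert_of_mem hb)))
    rw [show (S.card + 1) * m = m + S.card * m by ring]
    refine this.subset_right ?_
    intro c hc
    simp only [Set.mem_union, Set.mem_iUnion, Finset.mem_insert, exists_prop] at hc ⊢
    obtain ⟨b, hb | hb, hcb⟩ := hc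
    · exact Or.inl (hb ▸ hcb)
    · exact Or.inr ⟨b, hb, hcb⟩

/-- A Boolean assignment satisfies a clause if it makes some literal true. -/
def SatClause (φ : V → Bool) (C : Finset (V × Bool)) : Prop :=
  ∃ l ∈ C, φ l.1 = l.2

/-- An assignment satisfies a set of clauses if it satisfies each of them. -/
def SatSet (φ : V → Bool) (A : Set (Finset (V × Bool))) : Prop :=
  ∀ C ∈ A, SatClause φ C

/-- `Ω(θ)` : clauses `⋁_{i∈θ} ¬ξ_{i,x_i}` for all `x` supported on `θ`. -/
def Omega (p : ℕ) {n : ℕ} (θ : Finset (Fin n)) : Set (Finset ((Fin n × ZMod p) × Bool)) :=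
  {C | ∃ x : Fin n → ZMod p, suppV x ⊆ θ ∧ C = θ.image (fun i => ((i, x i), false))}

lemma geom_div (p : ℕ) (hp : 2 ≤ p) (m : ℕ) :
    (p ^ (m + 1) - p) / (p - 1) = ∑ k ∈ Finset.range m, p ^ (k + 1) := by
  have key : ∀ m, (p - 1) * ∑ k ∈ Finset.range m, p ^ (k + 1) = p ^ (m + 1) - p := by
    intro m
    induction m with
    | zero => simp
    | succ m ih =>
      have h1 : p ≤ p ^ (m + 1) := Nat.le_self_pow (by omega) p
      have h2 : p * p ^ (m + 1) = p ^ (m + 2) := by ring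
      have h3 : p ^ (m + 1) ≤ p ^ (m + 2) := by nlinarith
      have h4 : p ^ (m + 1 + 1) = p ^ (m + 2) := by ring
      rw [Finset.sum_range_succ, Nat.mul_add, ih, Nat.sub_mul, one_mul, h2]
      omega
  exact Nat.div_eq_of_eq_mul_left (by omega) (by rw [mul_comm]; exact (key m).symm)

lemma omega_step {p n : ℕ} [Fact (Nat.Prime p)] (θ : Finset (Fin n)) (i : Fin n) (hi : i ∈ θ)
    (x : Fin n → ZMod p) (hx : suppV x ⊆ θ.erase i) :
    Derives (Omega p θ ∪ VCl n p) p
      {(θ.erase i).image (fun j => ((j, x j), false))} := by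
  have hp : 2 ≤ p := (Fact.out (p := p.Prime)).two_le
  haveI : NeZero p := ⟨by omega⟩
  set g : ZMod p → (Fin n × ZMod p) × Bool := fun k => ((i, k), true) with hg
  set T : Finset ((Fin n × ZMod p) × Bool) :=
    (θ.erase i).image (fun j => ((j, x j), false)) with hT
  set cl : Finset (ZMod p) → Finset ((Fin n × ZMod p) × Bool) :=
    fun K => K.image g ∪ T with hcl
  set Ωc : ZMod p → Finset ((Fin n × ZMod p) × Bool) :=
    fun k => θ.image (fun j => ((j, Function.update x i k j), false)) with hΩc
  set A := Omega p θ ∪ VCl n p with hA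
  have hginj : Function.Injective g := by
    intro a b hab
    simpa [hg, Prod.ext_iff] using hab
  have hgT : ∀ k, g k ∉ T := by
    intro k hk
    simp only [hT, Finset.mem_image] at hk
    obtain ⟨j, _, hj⟩ := hk
    simpa [hg, Prod.ext_iff] using hj
  have hikT : ∀ k : ZMod p, (((i, k), false) : (Fin n × ZMod p) × Bool) ∉ T := by
    intro k hk
    simp only [hT, Finset.mem_image] at hk
    obtain ⟨j, hj, hjeq⟩ := hk
    exact (Finset.mem_erase.1 hj).1 (congrArg (fun z => z.1.1) hjeq)
  have hΩA : ∀ k, Ωc k ∈ A := by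
    intro k
    refine Or.inl ⟨Function.update x i k, ?_, rfl⟩
    intro j hj
    simp only [suppV, Finset.mem_filter] at hj
    by_cases hji : j = i
    · exact hji ▸ hi
    · have hxj : x j ≠ 0 := by
        have h2 := hj.2
        rwa [Function.update_of_ne hji] at h2
      exact Finset.mem_of_mem_erase (hx (by simp [suppV, hxj]))
  have hΩeq : ∀ k, Ωc k = insert ((i, k), false) T := by
    intro k
    have h1 : θ = insert i (θ.erase i) := (Finset.insert_erase hi).symm
    have h2 : Ωc k = (insert i (θ.erase i)).image
        (fun j => ((j, Function.update x i k j), false)) := by rw [hΩc, ← h1]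
    rw [h2, Finset.image_insert, Function.update_self]
    congr 1
    apply Finset.image_congr
    intro j hj
    have hji := (Finset.mem_erase.1 (Finset.mem_coe.1 hj)).1
    simp [Function.update_of_ne hji]
  have hres : ∀ (K : Finset (ZMod p)) (k : ZMod p), k ∈ K →
      Resolvent (cl K) (Ωc k) (cl (K.erase k)) := by
    intro K k hk
    refine ⟨(i, k), Finset.mem_union_left _ (Finset.mem_image_of_mem g hk), ?_, ?_⟩
    · rw [hΩeq k]; exact Finset.mem_insert_self _ _
    · have e1 : (cl K).erase ((i, k), true) = (K.erase k).image g ∪ T := by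
        rw [hcl]
        simp only
        rw [Finset.erase_union_distrib, Finset.erase_eq_of_notMem (hgT k),
          ← Finset.image_erase hginj]
      have e2 : (Ωc k).erase ((i, k), false) = T := by
        rw [hΩeq k, Finset.erase_insert (hikT k)]
      rw [e1, e2, hcl]
      simp [Finset.union_assoc]
  have hVc : (Finset.univ.image g : Finset ((Fin n × ZMod p) × Bool)) ∈ A :=
    Or.inr ⟨i, rfl⟩
  have hres0 : ∀ k : ZMod p,
      Resolvent (Finset.univ.image g) (Ωc k) (cl (Finset.univ.erase k)) := by
    intro k
    refine ⟨(i, k), Finset.mem_image_of_mem g (Finset.mem_univ k), ?_, ?_⟩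
    · rw [hΩeq k]; exact Finset.mem_insert_self _ _
    · rw [← Finset.image_erase hginj, hΩeq k, Finset.erase_insert (hikT k)]
  have main : ∀ (R : Finset (ZMod p)), R.Nonempty →
      ∃ L, IsDerivation A L ∧ L.length = R.card ∧ cl (Finset.univ \ R) ∈ L := by
    intro R hR
    induction hR using Finset.Nonempty.cons_induction with
    | singleton a =>
      refine ⟨[cl (Finset.univ \ {a})], ⟨trivial, Finset.univ.image g, Ωc a,
        Or.inl hVc, Or.inl (hΩA a), ?_⟩, by simp, by simp⟩
      rw [Finset.sdiff_singleton_eq_erase]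
      exact hres0 a
    | cons a R ha hR ih =>
      obtain ⟨L, hL, hlen, hmem⟩ := ih
      have hak : a ∈ Finset.univ \ R := by simp [ha]
      refine ⟨cl (Finset.univ \ Finset.cons a R ha) :: L,
        ⟨hL, cl (Finset.univ \ R), Ωc a, Or.inr hmem, Or.inl (hΩA a), ?_⟩,
        by simp [hlen, Finset.card_insert_of_notMem ha], List.mem_cons_self⟩
      have : Finset.univ \ Finset.cons a R ha = (Finset.univ \ R).erase a := by
        rw [Finset.cons_eq_insert, Finset.sdiff_insert]
      rw [this]
      exact hres (Finset.univ \ R) a hak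
  obtain ⟨L, hL, hlen, hmem⟩ := main Finset.univ Finset.univ_nonempty
  refine ⟨L, hL, ?_, ?_⟩
  · rw [hlen, Finset.card_univ, ZMod.card]
  · intro c hc
    rw [Set.mem_singleton_iff] at hc
    subst hc
    right
    have h0 : (Finset.univ \ Finset.univ : Finset (ZMod p)) = ∅ := Finset.sdiff_self _
    rw [h0] at hmem
    have hT0 : cl ∅ = T := by simp [hcl]
    exact Set.mem_setOf.2 (hT0 ▸ hmem)

/-- `Ω(θ) ∧ V` has a resolution refutation of length at most `(p^{|θ|+1} − p)/(p − 1)`. -/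
theorem stmt7 {p n : ℕ} [Fact (Nat.Prime p)] (θ : Finset (Fin n)) :
    Derives (Omega p θ ∪ VCl n p) ((p ^ (θ.card + 1) - p) / (p - 1))
      {(∅ : Finset ((Fin n × ZMod p) × Bool))} := by
  have hp : 2 ≤ p := (Fact.out (p := p.Prime)).two_le
  haveI : NeZero p := ⟨by omega⟩
  have key : ∀ m (θ : Finset (Fin n)), θ.card = m →
      Derives (Omega p θ ∪ VCl n p) (∑ k ∈ Finset.range m, p ^ (k + 1)) {∅} := by
    intro m
    induction m with
    | zero =>
      intro θ hθ
      rw [Finset.card_eq_zero] at hθ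
      subst hθ
      apply derives_of_subset
      intro c hc
      rw [Set.mem_singleton_iff] at hc; subst hc
      exact Or.inl ⟨0, by simp [suppV], by simp⟩
    | succ m ih =>
      intro θ hθ
      have hpos : 0 < θ.card := by omega
      obtain ⟨i, hi⟩ := Finset.card_pos.1 hpos
      have hcard' : (θ.erase i).card = m := by
        rw [Finset.card_erase_of_mem hi, hθ]
        omega
      have hsupp : ∀ y : {a // a ∈ θ.erase i} → ZMod p,
          suppV (fun j => if h : j ∈ θ.erase i then y ⟨j, h⟩ else 0) ⊆ θ.erase i := by
        intro y j hj
        simp only [suppV, Finset.mem_filter] at hj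
        by_contra h
        exact hj.2 (by simp [h])
      have hbig := derives_biUnion (A := Omega p θ ∪ VCl n p)
        (Finset.univ : Finset ({a // a ∈ θ.erase i} → ZMod p))
        (fun y => {(θ.erase i).image
          (fun j => ((j, if h : j ∈ θ.erase i then y ⟨j, h⟩ else 0), false))})
        (fun y _ => omega_step θ i hi _ (hsupp y))
      have hcardι : (Finset.univ : Finset ({a // a ∈ θ.erase i} → ZMod p)).card = p ^ m := by
        rw [Finset.card_univ, Fintype.card_fun, ZMod.card, Fintype.card_coe, hcard']
      have hOm : Omega p (θ.erase i) ⊆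
          ⋃ y ∈ (Finset.univ : Finset ({a // a ∈ θ.erase i} → ZMod p)),
            {(θ.erase i).image
              (fun j => ((j, if h : j ∈ θ.erase i then y ⟨j, h⟩ else 0), false))} := by
        rintro C ⟨x, hx, rfl⟩
        refine Set.mem_biUnion (Finset.mem_univ (fun a => x a.1)) ?_
        rw [Set.mem_singleton_iff]
        apply Finset.image_congr
        intro j hj
        have hj' := Finset.mem_coe.1 hj
        simp [hj']
      have h1 : Derives (Omega p θ ∪ VCl n p) (p ^ (m + 1)) (Omega p (θ.erase i)) := by
        have := (hbig.subset_right hOm)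
        rw [hcardι] at this
        exact this.mono_n (by rw [pow_succ])
      have h2 : Derives ((Omega p θ ∪ VCl n p) ∪ Omega p (θ.erase i))
          (∑ k ∈ Finset.range m, p ^ (k + 1)) {∅} := by
        refine (ih (θ.erase i) hcard').mono_set ?_
        rintro C (hC | hC)
        · exact Or.inr hC
        · exact Or.inl (Or.inr hC)
      have h3 := h1.trans h2
      refine h3.mono_n ?_
      rw [Finset.sum_range_succ]
      omega
  rw [geom_div p hp]
  exact key θ.card θ rfl
end

section
/- If a_1, a_2 ∈ F_p^n satisfy lv(a_1, a_2) = ∅ (no coefficient cancels in the sum), then F(a_1 + a_2, b_1 + b_2) ⊑ F(a_1, b_1) ∪ F(a_2, b_2), i.e., every clause of F(a_1+a_2, b_1+b_2) contains some clause of F(a_1,b_1) ∪ F(a_2,b_2) as a subset. -/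
lemma aux_mem {p n : ℕ} (a : Fin n → ZMod p) (b : ZMod p) (x : Fin n → ZMod p)
    (hd : dotProduct a x ≠ b) : CCl a x ∈ FEq a b := by
  refine ⟨fun i => if a i ≠ 0 then x i else 0, ⟨?_, ?_⟩, ?_⟩
  · have : dotProduct a (fun i => if a i ≠ 0 then x i else 0)
        = dotProduct a x := by
      unfold dotProduct
      refine Finset.sum_congr rfl fun i _ => ?_
      by_cases hi : a i = 0 <;> simp [hi]
    rw [this]; exact hd
  · intro i hi
    simp only [suppV, Finset.mem_filter, Finset.mem_univ, true_and] at hi ⊢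
    intro ha; exact hi (by simp [ha])
  · unfold CCl
    refine Finset.image_congr fun i hi => ?_
    simp only [suppV, Finset.mem_filter, Finset.mem_univ, true_and, Finset.coe_filter,
      Set.mem_setOf_eq] at hi
    simp [hi]

/-- If no coefficient cancels in `a₁ + a₂`, then every clause of
`F(a₁+a₂, b₁+b₂)` contains some clause of `F(a₁,b₁) ∪ F(a₂,b₂)`. -/
theorem stmt10 {p n : ℕ} [Fact (Nat.Prime p)]
    (a₁ a₂ : Fin n → ZMod p) (b₁ b₂ : ZMod p)
    (h : (suppV a₁ ∪ suppV a₂) \ suppV (a₁ + a₂) = ∅) :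
    ∀ C ∈ FEq (a₁ + a₂) (b₁ + b₂), ∃ C' ∈ FEq a₁ b₁ ∪ FEq a₂ b₂, C' ⊆ C := by
  rintro C ⟨x, ⟨hx, hsupp⟩, rfl⟩
  have hsub : suppV a₁ ∪ suppV a₂ ⊆ suppV (a₁ + a₂) := by
    intro i hi
    by_contra hni
    have : i ∈ (suppV a₁ ∪ suppV a₂) \ suppV (a₁ + a₂) := Finset.mem_sdiff.mpr ⟨hi, hni⟩
    rw [h] at this
    exact absurd this (Finset.notMem_empty i)
  have key : dotProduct a₁ x ≠ b₁ ∨ dotProduct a₂ x ≠ b₂ := by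
    by_contra hc
    push_neg at hc
    exact hx (by rw [add_dotProduct, hc.1, hc.2])
  rcases key with hk | hk
  · refine ⟨CCl a₁ x, Or.inl (aux_mem a₁ b₁ x hk), ?_⟩
    exact Finset.image_subset_image (fun i hi => hsub (Finset.mem_union_left _ hi))
  · refine ⟨CCl a₂ x, Or.inr (aux_mem a₂ b₂ x hk), ?_⟩
    exact Finset.image_subset_image (fun i hi => hsub (Finset.mem_union_right _ hi))
end

section
/- The CFI gadget X_N on a finite set N of size n ≥ 1 has exactly 2^{n−1} automorphisms (as a colored graph), and each automorphism is uniquely determined by a subset S ⊆ N of even cardinality: it swaps a_w and b_w exactly for w ∈ S, and permutes the middle vertices accordingly (m_T ↦ m_{T Δ S}). -/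
/-- Vertices of the CFI gadget `X_N` for `N = Fin n`: vertices `a w`, `b w`
for `w ∈ N` and middle vertices `m T` for even-cardinality `T ⊆ N`. -/
inductive CFIV (n : ℕ) where
  | a : Fin n → CFIV n
  | b : Fin n → CFIV n
  | m : {T : Finset (Fin n) // Even T.card} → CFIV n

/-- Adjacency of the CFI gadget: `m T` is adjacent to `a w` iff `w ∈ T`
and to `b w` iff `w ∉ T`. -/
def CFIAdj {n : ℕ} : CFIV n → CFIV n → Prop
  | .m T, .a w => w ∈ T.1
  | .a w, .m T => w ∈ T.1
  | .m T, .b w => w ∉ T.1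
  | .b w, .m T => w ∉ T.1
  | _, _ => False

/-- Coloring: `a w` and `b w` both get color `c_w` (encoded `Sum.inl w`), all
middle vertices get a common color `m` (encoded `Sum.inr ()`). -/
def CFIColor {n : ℕ} : CFIV n → Fin n ⊕ Unit
  | .a w => Sum.inl w
  | .b w => Sum.inl w
  | .m _ => Sum.inr ()

/-- A color-preserving automorphism of the CFI gadget. -/
def IsCFIAut {n : ℕ} (f : CFIV n ≃ CFIV n) : Prop :=
  (∀ u v, CFIAdj (f u) (f v) ↔ CFIAdj u v) ∧ ∀ v, CFIColor (f v) = CFIColor v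

lemma even_symmDiff_card {n : ℕ} {T S : Finset (Fin n)} (hT : Even T.card)
    (hS : Even S.card) : Even ((symmDiff T S)).card := by
  have h1 : (symmDiff T S).card = (T \ S).card + (S \ T).card := by
    rw [symmDiff_def, Finset.sup_eq_union, Finset.card_union_of_disjoint]
    exact disjoint_sdiff_sdiff
  have h2 : (T \ S).card + (T ∩ S).card = T.card := Finset.card_sdiff_add_card_inter T S
  have h3 : (S \ T).card + (S ∩ T).card = S.card := Finset.card_sdiff_add_card_inter S T
  have h4 : (T ∩ S).card = (S ∩ T).card := by rw [Finset.inter_comm]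
  rw [Nat.even_iff] at *
  omega

def cfiAct {n : ℕ} (S : Finset (Fin n)) (hS : Even S.card) : CFIV n → CFIV n
  | .a w => if w ∈ S then .b w else .a w
  | .b w => if w ∈ S then .a w else .b w
  | .m T => .m ⟨symmDiff T.1 S, even_symmDiff_card T.2 hS⟩

lemma cfiAct_invol {n : ℕ} (S : Finset (Fin n)) (hS : Even S.card) :
    Function.Involutive (cfiAct S hS) := by
  intro v
  cases v with
  | a w => by_cases h : w ∈ S <;> simp [cfiAct, h]
  | b w => by_cases h : w ∈ S <;> simp [cfiAct, h]
  | m T => simp only [cfiAct]; congr 1; exact Subtype.ext (symmDiff_symmDiff_cancel_right S T.1)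

def cfiPerm {n : ℕ} (S : Finset (Fin n)) (hS : Even S.card) : CFIV n ≃ CFIV n :=
  (cfiAct_invol S hS).toPerm

lemma mem_symmDiff' {n : ℕ} {T S : Finset (Fin n)} {w : Fin n} :
    w ∈ symmDiff T S ↔ (w ∈ T ∧ w ∉ S) ∨ (w ∈ S ∧ w ∉ T) := Finset.mem_symmDiff

lemma cfiPerm_aut {n : ℕ} (S : Finset (Fin n)) (hS : Even S.card) :
    IsCFIAut (cfiPerm S hS) := by
  constructor
  · intro u v
    cases u <;> cases v <;>
      simp only [cfiPerm, Function.Involutive.coe_toPerm, cfiAct, CFIAdj] <;>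
      first
      | rfl
      | (rename_i T w; by_cases h : w ∈ S <;>
          simp only [h, if_true, if_false, CFIAdj, mem_symmDiff'] <;> tauto)
      | (rename_i w T; by_cases h : w ∈ S <;>
          simp only [h, if_true, if_false, CFIAdj, mem_symmDiff'] <;> tauto)
      | (rename_i w w'; by_cases h : w ∈ S <;> by_cases h' : w' ∈ S <;>
          simp [h, h', CFIAdj])
  · intro v
    cases v with
    | a w => by_cases h : w ∈ S <;> simp [cfiPerm, cfiAct, h, CFIColor]
    | b w => by_cases h : w ∈ S <;> simp [cfiPerm, cfiAct, h, CFIColor]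
    | m T => rfl


lemma aut_char {n : ℕ} (f : CFIV n ≃ CFIV n) (h : IsCFIAut f) :
    ∃ S : Finset (Fin n), ∃ hS : Even S.card,
      f = cfiPerm S hS := by
  classical
  obtain ⟨hadj, hcol⟩ := h
  have hab : ∀ w : Fin n, CFIV.a (n := n) w ≠ CFIV.b w := by intro w h; cases h
  have ha : ∀ w, f (.a w) = .a w ∨ f (.a w) = .b w := by
    intro w
    have hc := hcol (.a w)
    cases hfa : f (.a w) with
    | a w' => left; rw [hfa] at hc; simp only [CFIColor, Sum.inl.injEq] at hc; rw [hc]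
    | b w' => right; rw [hfa] at hc; simp only [CFIColor, Sum.inl.injEq] at hc; rw [hc]
    | m T => rw [hfa] at hc; simp [CFIColor] at hc
  have hb : ∀ w, f (.b w) = .a w ∨ f (.b w) = .b w := by
    intro w
    have hc := hcol (.b w)
    cases hfa : f (.b w) with
    | a w' => left; rw [hfa] at hc; simp only [CFIColor, Sum.inl.injEq] at hc; rw [hc]
    | b w' => right; rw [hfa] at hc; simp only [CFIColor, Sum.inl.injEq] at hc; rw [hc]
    | m T => rw [hfa] at hc; simp [CFIColor] at hc
  have hm : ∀ T, ∃ T', f (.m T) = .m T' := by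
    intro T
    have hc := hcol (.m T)
    cases hfa : f (.m T) with
    | a w' => rw [hfa] at hc; simp [CFIColor] at hc
    | b w' => rw [hfa] at hc; simp [CFIColor] at hc
    | m T' => exact ⟨T', rfl⟩
  set S : Finset (Fin n) := Finset.univ.filter (fun w => f (.a w) = .b w) with hSdef
  have hSmem : ∀ w, w ∈ S ↔ f (.a w) = .b w := by
    intro w; simp [hSdef]
  have ha' : ∀ w, f (.a w) = if w ∈ S then .b w else .a w := by
    intro w
    by_cases hw : w ∈ S
    · rw [if_pos hw]; exact (hSmem w).1 hw
    · rw [if_neg hw]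
      rcases ha w with h | h
      · exact h
      · exact absurd ((hSmem w).2 h) hw
  have hb' : ∀ w, f (.b w) = if w ∈ S then .a w else .b w := by
    intro w
    by_cases hw : w ∈ S
    · rw [if_pos hw]
      rcases hb w with h | h
      · exact h
      · exfalso
        exact hab w (f.injective (((hSmem w).1 hw).trans h.symm))
    · rw [if_neg hw]
      rcases hb w with h | h
      · exfalso
        have haw : f (.a w) = .a w := by
          rcases ha w with h2 | h2
          · exact h2
          · exact absurd ((hSmem w).2 h2) hw
        exact hab w (f.injective (haw.trans h.symm))
      · exact h
  have hm' : ∀ T : {T : Finset (Fin n) // Even T.card},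
      ∃ hT : Even (symmDiff T.1 S).card, f (.m T) = .m ⟨symmDiff T.1 S, hT⟩ := by
    intro T
    obtain ⟨T', hT'⟩ := hm T
    have hmemT' : T'.1 = symmDiff T.1 S := by
      apply Finset.ext
      intro w
      have key := hadj (.m T) (.a w)
      rw [hT', ha' w] at key
      rw [mem_symmDiff']
      by_cases hw : w ∈ S
      · rw [if_pos hw] at key
        simp only [CFIAdj] at key
        constructor
        · intro h; tauto
        · intro h; tauto
      · rw [if_neg hw] at key
        simp only [CFIAdj] at key
        constructor
        · intro h; tauto
        · intro h; tauto
    refine ⟨hmemT' ▸ T'.2, ?_⟩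
    rw [hT']
    congr 1
    exact Subtype.ext hmemT'
  have hS : Even S.card := by
    obtain ⟨h0, -⟩ := hm' ⟨∅, by simp⟩
    have he : symmDiff (∅ : Finset (Fin n)) S = S := by
      rw [symmDiff_def]; simp
    rwa [he] at h0
  refine ⟨S, hS, ?_⟩
  apply Equiv.ext
  intro v
  cases v with
  | a w =>
      rw [ha' w]
      simp only [cfiPerm, Function.Involutive.coe_toPerm, cfiAct]
  | b w =>
      rw [hb' w]
      simp only [cfiPerm, Function.Involutive.coe_toPerm, cfiAct]
  | m T =>
      obtain ⟨hT, hfT⟩ := hm' T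
      rw [hfT]
      simp only [cfiPerm, Function.Involutive.coe_toPerm, cfiAct]

lemma cfiPerm_inj {n : ℕ} {S1 S2 : Finset (Fin n)} {h1 : Even S1.card}
    {h2 : Even S2.card} (h : cfiPerm S1 h1 = cfiPerm S2 h2) : S1 = S2 := by
  apply Finset.ext
  intro w
  have key : cfiPerm S1 h1 (.a w) = cfiPerm S2 h2 (.a w) := by rw [h]
  simp only [cfiPerm, Function.Involutive.coe_toPerm, cfiAct] at key
  by_cases hw1 : w ∈ S1 <;> by_cases hw2 : w ∈ S2 <;>
    simp only [hw1, hw2, if_true, if_false, iff_true, iff_false] at key ⊢ <;>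
    first | trivial | (exfalso; cases key)

set_option maxHeartbeats 2000000 in
lemma card_even_subsets {n : ℕ} (hn : 1 ≤ n) :
    Nat.card {S : Finset (Fin n) // Even S.card} = 2 ^ (n - 1) := by
  classical
  set x0 : Fin n := ⟨0, hn⟩
  have hpar : ∀ S : Finset (Fin n), Even S.card ↔ ¬ Even ((symmDiff S {x0}).card) := by
    intro S
    have := even_symmDiff_card (T := S) (S := {x0})
    have h2 : (symmDiff S {x0}).card = (S \ {x0}).card + ({x0} \ S).card := by
      rw [symmDiff_def, Finset.sup_eq_union, Finset.card_union_of_disjoint]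
      exact disjoint_sdiff_sdiff
    have h3 : (S \ {x0}).card + (S ∩ {x0}).card = S.card :=
      Finset.card_sdiff_add_card_inter S {x0}
    have h4 : ({x0} \ S).card + ({x0} ∩ S).card = ({x0} : Finset (Fin n)).card :=
      Finset.card_sdiff_add_card_inter {x0} S
    have h5 : (S ∩ {x0}).card = ({x0} ∩ S).card := by rw [Finset.inter_comm]
    have h6 : ({x0} : Finset (Fin n)).card = 1 := Finset.card_singleton x0
    simp only [Nat.even_iff, Nat.not_even_iff]
    omega
  have hinv : ∀ S : Finset (Fin n), ¬ Even S.card → Even (symmDiff S {x0}).card := by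
    intro S hS
    rw [hpar (symmDiff S {x0}), symmDiff_symmDiff_cancel_right]
    exact hS
  let e : {S : Finset (Fin n) // Even S.card} ≃ {S : Finset (Fin n) // ¬ Even S.card} :=
    { toFun := fun S => ⟨symmDiff S.1 {x0}, (hpar S.1).1 S.2⟩
      invFun := fun S => ⟨symmDiff S.1 {x0}, hinv S.1 S.2⟩
      left_inv := fun S => Subtype.ext (symmDiff_symmDiff_cancel_right {x0} S.1)
      right_inv := fun S => Subtype.ext (symmDiff_symmDiff_cancel_right {x0} S.1) }
  have hEO : Fintype.card {S : Finset (Fin n) // Even S.card}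
      = Fintype.card {S : Finset (Fin n) // ¬ Even S.card} := Fintype.card_congr e
  have hcompl : Fintype.card {S : Finset (Fin n) // ¬ Even S.card}
      = Fintype.card (Finset (Fin n)) - Fintype.card {S : Finset (Fin n) // Even S.card} :=
    Fintype.card_subtype_compl _
  have hle : Fintype.card {S : Finset (Fin n) // Even S.card} ≤ Fintype.card (Finset (Fin n)) :=
    Fintype.card_subtype_le _
  have hfin : Fintype.card (Finset (Fin n)) = 2 ^ n := by
    rw [Fintype.card_finset, Fintype.card_fin]
  have hpow : 2 ^ n = 2 * 2 ^ (n - 1) := by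
    conv_lhs => rw [show n = (n - 1) + 1 by omega]
    rw [pow_succ]
    ring
  rw [Nat.card_eq_fintype_card]
  omega

/-- The CFI gadget on `n ≥ 1` points has exactly `2^{n-1}` color-preserving
automorphisms, and each of them is uniquely determined by a subset `S ⊆ N` of
even cardinality: it swaps `a w` and `b w` exactly for `w ∈ S` and maps
`m T` to `m (T Δ S)`. -/
theorem stmt14 {n : ℕ} (hn : 1 ≤ n) :
    Nat.card {f : CFIV n ≃ CFIV n // IsCFIAut f} = 2 ^ (n - 1) ∧
    ∀ f : CFIV n ≃ CFIV n, IsCFIAut f →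
      ∃! S : Finset (Fin n), Even S.card ∧
        (∀ w, f (.a w) = if w ∈ S then .b w else .a w) ∧
        (∀ w, f (.b w) = if w ∈ S then .a w else .b w) ∧
        (∀ T : {T : Finset (Fin n) // Even T.card},
          ∃ h : Even (symmDiff T.1 S).card, f (.m T) = .m ⟨symmDiff T.1 S, h⟩) := by
  classical
  constructor
  · have hbij : Function.Bijective
        (fun S : {S : Finset (Fin n) // Even S.card} =>
          (⟨cfiPerm S.1 S.2, cfiPerm_aut S.1 S.2⟩ : {f : CFIV n ≃ CFIV n // IsCFIAut f})) := by
      constructor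
      · intro S1 S2 hEq
        exact Subtype.ext (cfiPerm_inj (congrArg Subtype.val hEq))
      · rintro ⟨f, hf⟩
        obtain ⟨S, hS, rfl⟩ := aut_char f hf
        exact ⟨⟨S, hS⟩, rfl⟩
    rw [← Nat.card_congr (Equiv.ofBijective _ hbij)]
    exact card_even_subsets hn
  · intro f hf
    obtain ⟨S, hS, rfl⟩ := aut_char f hf
    refine ⟨S, ⟨hS, ?_, ?_, ?_⟩, ?_⟩
    · intro w
      simp only [cfiPerm, Function.Involutive.coe_toPerm, cfiAct]
    · intro w
      simp only [cfiPerm, Function.Involutive.coe_toPerm, cfiAct]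
    · intro T
      exact ⟨even_symmDiff_card T.2 hS, rfl⟩
    · rintro S' ⟨hS', ha', -, -⟩
      apply Finset.ext
      intro w
      have key := ha' w
      simp only [cfiPerm, Function.Involutive.coe_toPerm, cfiAct] at key
      by_cases hw1 : w ∈ S' <;> by_cases hw2 : w ∈ S <;>
        simp only [hw1, hw2, if_true, if_false, iff_true, iff_false] at key ⊢ <;>
        first | trivial | (exact absurd key (by intro hc; cases hc))
end

section
/- For every finite set N and every subset S ⊆ N of even cardinality, the map on X_N that sends a_w ↔ b_w for w ∈ S, fixes a_w, b_w for w ∉ S, and sends m_T to m_{T Δ S}, is a color-preserving graph automorphism of X_N. -/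
lemma even_card_symmDiff {α : Type*} [DecidableEq α] {T S : Finset α}
    (hT : Even T.card) (hS : Even S.card) : Even (symmDiff T S).card := by
  have hdisj : Disjoint (symmDiff T S) (T ∩ S) := by
    rw [Finset.disjoint_left]
    intro x hx hx'
    simp [Finset.mem_symmDiff, Finset.mem_inter] at hx hx'
    tauto
  have hunion : symmDiff T S ∪ (T ∩ S) = T ∪ S := by
    ext x
    simp [Finset.mem_symmDiff, Finset.mem_inter, Finset.mem_union]
    tauto
  have h1 := Finset.card_union_of_disjoint hdisj
  rw [hunion] at h1
  have h2 := Finset.card_inter_add_card_union T S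
  obtain ⟨t, ht⟩ := hT
  obtain ⟨s, hs⟩ := hS
  refine ⟨t + s - (T ∩ S).card, by omega⟩

/-- The swap map for the theorem. -/
def cfiSwap {n : ℕ} (S : Finset (Fin n)) (hS : Even S.card) : CFIV n → CFIV n
  | .a w => if w ∈ S then .b w else .a w
  | .b w => if w ∈ S then .a w else .b w
  | .m T => .m ⟨symmDiff T.1 S, even_card_symmDiff T.2 hS⟩

lemma cfiSwap_involutive {n : ℕ} (S : Finset (Fin n)) (hS : Even S.card) :
    Function.Involutive (cfiSwap S hS) := by
  intro v
  cases v with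
  | a w => by_cases h : w ∈ S <;> simp [cfiSwap, h]
  | b w => by_cases h : w ∈ S <;> simp [cfiSwap, h]
  | m T => simp [cfiSwap, symmDiff_symmDiff_cancel_right]

/-- For every even-cardinality `S ⊆ N`, the map swapping `a w ↔ b w` for
`w ∈ S`, fixing `a w, b w` for `w ∉ S`, and sending `m T` to `m (T Δ S)`, is a
color-preserving automorphism of the CFI gadget `X_N`. -/
theorem stmt15 {n : ℕ} (S : Finset (Fin n)) (hS : Even S.card) :
    ∃ f : CFIV n ≃ CFIV n,
      (∀ w, f (.a w) = if w ∈ S then .b w else .a w) ∧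
      (∀ w, f (.b w) = if w ∈ S then .a w else .b w) ∧
      (∀ T : {T : Finset (Fin n) // Even T.card},
        ∃ h : Even (symmDiff T.1 S).card, f (.m T) = .m ⟨symmDiff T.1 S, h⟩) ∧
      IsCFIAut f := by
  have hinv := cfiSwap_involutive S hS
  have he : ∀ v, hinv.toPerm _ v = cfiSwap S hS v := fun _ => rfl
  refine ⟨hinv.toPerm _, fun w => rfl, fun w => rfl,
    fun T => ⟨even_card_symmDiff T.2 hS, rfl⟩, ?_, ?_⟩
  · intro u v
    cases u <;> cases v <;>
      simp only [he, cfiSwap, CFIAdj] <;> split_ifs with h h' <;>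
      simp_all [CFIAdj, Finset.mem_symmDiff] <;> tauto
  · intro v
    cases v with
    | a w => by_cases h : w ∈ S <;> simp [he, cfiSwap, h, CFIColor]
    | b w => by_cases h : w ∈ S <;> simp [he, cfiSwap, h, CFIColor]
    | m T => rfl
end
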